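/- Suppose rank(Σ_{l=1}^L B_l) = K. Then the K-th largest (in magnitude) eigenvalue of Ω_sum = Θ Z (Σ_{l=1}^L B_l) Z^T Θ satisfies |λ_K(Ω_sum)| ≥ θ_min² n_min |λ_K(Σ_{l=1}^L B_l)|. -/

import Mathlib

open Matrix MeasureTheory ProbabilityTheory
open scoped BigOperators ENNReal

noncomputable section

/-- Euclidean norm of a finite real vector. -/
def vecNorm {m : ℕ} (v : Fin m → ℝ) : ℝ := Real.sqrt (∑ i, v i ^ 2)

/-- Frobenius norm of a real matrix. -/
def frobNorm {m p : ℕ} (M : Matrix (Fin m) (Fin p) ℝ) : ℝ :=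
  Real.sqrt (∑ i, ∑ j, M i j ^ 2)

/-- Spectral norm (ℓ² operator norm) of a real matrix. -/
def specNorm {m p : ℕ} (M : Matrix (Fin m) (Fin p) ℝ) : ℝ :=
  sSup ((fun x => vecNorm (M.mulVec x)) '' {x : Fin p → ℝ | vecNorm x ≤ 1})

open Classical in
/-- The k-th largest (1-indexed) eigenvalue in magnitude of a real symmetric matrix
(`0` if the matrix is not Hermitian). -/
def kthAbsEig {m : ℕ} (M : Matrix (Fin m) (Fin m) ℝ) (k : ℕ) : ℝ :=
  if hM : M.IsHermitian then
    (((Finset.univ : Finset (Fin m)).val.map fun i => |hM.eigenvalues i|).sort (· ≤ ·)).getD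
      (m - k) 0
  else 0

/-- `Z` is a community membership matrix: 0/1 entries, exactly one 1 per row,
every column nonzero. -/
def IsMembership {n K : ℕ} (Z : Matrix (Fin n) (Fin K) ℝ) : Prop :=
  (∀ i k, Z i k = 0 ∨ Z i k = 1) ∧ (∀ i, ∑ k, Z i k = 1) ∧ (∀ k, ∃ i, Z i k = 1)

/-- The MLDCSBM model hypotheses on the parameters `Z`, `θ`, `B`. -/
def MLDCSBM {n L K : ℕ} (Z : Matrix (Fin n) (Fin K) ℝ) (θ : Fin n → ℝ)
    (B : Fin L → Matrix (Fin K) (Fin K) ℝ) : Prop :=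
  IsMembership Z ∧ (∀ i, 0 < θ i ∧ θ i ≤ 1) ∧
    (∀ l, (B l).IsSymm ∧ ∀ a b, 0 ≤ B l a b ∧ B l a b ≤ 1)

/-- Ω_l = Θ Z B_l Zᵀ Θ. -/
def OmegaL {n K : ℕ} (θ : Fin n → ℝ) (Z : Matrix (Fin n) (Fin K) ℝ)
    (Bl : Matrix (Fin K) (Fin K) ℝ) : Matrix (Fin n) (Fin n) ℝ :=
  Matrix.diagonal θ * Z * Bl * Zᵀ * Matrix.diagonal θ

def thetaMin {n : ℕ} (θ : Fin n → ℝ) : ℝ := sInf (Set.range θ)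
def thetaMax {n : ℕ} (θ : Fin n → ℝ) : ℝ := sSup (Set.range θ)

/-- Minimum community size. -/
def nMin {n K : ℕ} (Z : Matrix (Fin n) (Fin K) ℝ) : ℝ :=
  sInf (Set.range fun k : Fin K => ∑ i, Z i k)

/-- Maximum community size. -/
def nMax {n K : ℕ} (Z : Matrix (Fin n) (Fin K) ℝ) : ℝ :=
  sSup (Set.range fun k : Fin K => ∑ i, Z i k)

/-- Column `k` of a matrix, as a vector. -/
def colVec {n K : ℕ} (U : Matrix (Fin n) (Fin K) ℝ) (k : Fin K) : Fin n → ℝ := fun i => U i k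

/-- Row-normalized version of a matrix: each row divided by its Euclidean norm. -/
def rowNormalize {n K : ℕ} (U : Matrix (Fin n) (Fin K) ℝ) : Matrix (Fin n) (Fin K) ℝ :=
  fun i k => U i k / vecNorm (fun j => U i j)

/-- Diagonal degree matrix of a square matrix. -/
def degDiag {n : ℕ} (M : Matrix (Fin n) (Fin n) ℝ) : Matrix (Fin n) (Fin n) ℝ :=
  Matrix.diagonal fun i => ∑ j, M i j


noncomputable def evec {m : ℕ} {M : Matrix (Fin m) (Fin m) ℝ} (hM : M.IsHermitian) (i : Fin m) :
    Fin m → ℝ := hM.eigenvectorBasis i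

lemma parseval {m : ℕ} {M : Matrix (Fin m) (Fin m) ℝ} (hM : M.IsHermitian) (x : Fin m → ℝ) :
    ∑ i, (evec hM i ⬝ᵥ x) ^ 2 = x ⬝ᵥ x := by
  have h := (hM.eigenvectorBasis).sum_inner_mul_inner (WithLp.toLp 2 x) (WithLp.toLp 2 x)
  simp only [PiLp.inner_apply, RCLike.inner_apply, starRingEnd_apply, star_trivial] at h
  calc ∑ i, (evec hM i ⬝ᵥ x)^2
      = ∑ i, (∑ j, x j * evec hM i j) * (∑ j, evec hM i j * x j) := by
        refine Finset.sum_congr rfl fun i _ => ?_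
        rw [sq]; congr 1; simp [dotProduct, mul_comm]
    _ = ∑ j, x j * x j := by simpa only [evec, mul_comm] using h
    _ = x ⬝ᵥ x := rfl

lemma evec_dot_mulVec {m : ℕ} {M : Matrix (Fin m) (Fin m) ℝ} (hM : M.IsHermitian)
    (x : Fin m → ℝ) (i : Fin m) :
    evec hM i ⬝ᵥ (M *ᵥ x) = hM.eigenvalues i * (evec hM i ⬝ᵥ x) := by
  have hsym : Mᵀ = M := by rw [← Matrix.conjTranspose_eq_transpose_of_trivial]; exact hM
  have h1 : evec hM i ᵥ* M = hM.eigenvalues i • evec hM i := by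
    rw [← Matrix.mulVec_transpose, hsym]
    exact hM.mulVec_eigenvectorBasis i
  rw [Matrix.dotProduct_mulVec, h1, smul_dotProduct]
  rfl

lemma parseval_mulVec {m : ℕ} {M : Matrix (Fin m) (Fin m) ℝ} (hM : M.IsHermitian) (x : Fin m → ℝ) :
    ∑ i, (hM.eigenvalues i * (evec hM i ⬝ᵥ x)) ^ 2 = (M *ᵥ x) ⬝ᵥ (M *ᵥ x) := by
  rw [← parseval hM (M *ᵥ x)]
  exact Finset.sum_congr rfl fun i _ => by rw [evec_dot_mulVec]

lemma getD_nonneg (l : List ℝ) (i : ℕ) (h : ∀ x ∈ l, 0 ≤ x) : 0 ≤ l.getD i 0 := by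
  rw [List.getD_eq_getElem?_getD]
  rcases h' : l[i]? with _ | a
  · simp
  · simpa using h a (List.mem_of_getElem? h')

lemma sorted_getD_zero_le {l : List ℝ} (hs : l.Pairwise (· ≤ ·)) {x : ℝ} (hx : x ∈ l) :
    l.getD 0 0 ≤ x := by
  cases l with
  | nil => simp at hx
  | cons a tl =>
    rcases List.mem_cons.mp hx with rfl | hx
    · simp
    · simpa using (List.pairwise_cons.mp hs).1 x hx

lemma sorted_getD_ge {l : List ℝ} (hs : l.Pairwise (· ≤ ·)) {t : ℝ} {j : ℕ} (hj : j < l.length)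
    (hcount : l.countP (fun x => decide (x < t)) ≤ j) : t ≤ l.getD j 0 := by
  by_contra h
  push_neg at h
  have hgd : l.getD j 0 = l.get ⟨j, hj⟩ := by
    rw [List.getD_eq_getElem?_getD, List.getElem?_eq_getElem hj]; rfl
  have htake : ∀ x ∈ l.take (j+1), decide (x < t) = true := by
    intro x hx
    rcases List.mem_take_iff_getElem.mp hx with ⟨i, hi, rfl⟩
    have hi' : i < l.length := lt_of_lt_of_le hi (min_le_right _ _)
    have : l.get ⟨i, hi'⟩ ≤ l.get ⟨j, hj⟩ :=
      hs.rel_get_of_le (Fin.mk_le_mk.mpr (Nat.lt_succ_iff.mp (lt_of_lt_of_le hi (min_le_left _ _))))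
    simp only [decide_eq_true_eq]
    calc l[i] = l.get ⟨i, hi'⟩ := rfl
      _ ≤ l.get ⟨j, hj⟩ := this
      _ < t := hgd ▸ h
  have h1 : (l.take (j+1)).countP (fun x => decide (x < t)) = j+1 := by
    rw [List.countP_eq_length_filter, List.filter_eq_self.mpr htake, List.length_take]
    omega
  have h2 : (l.take (j+1)).countP (fun x => decide (x < t)) ≤ l.countP (fun x => decide (x < t)) := by
    rw [List.countP_eq_length_filter, List.countP_eq_length_filter]
    exact ((List.take_sublist _ _).filter _).length_le
  omega

lemma kthAbsEig_eq {m : ℕ} {M : Matrix (Fin m) (Fin m) ℝ} (hM : M.IsHermitian) (k : ℕ) :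
    kthAbsEig M k =
      (((Finset.univ : Finset (Fin m)).val.map fun i => |hM.eigenvalues i|).sort (· ≤ ·)).getD
        (m - k) 0 := by
  rw [kthAbsEig, dif_pos hM]

lemma mem_sortedAbs {m : ℕ} {M : Matrix (Fin m) (Fin m) ℝ} (hM : M.IsHermitian) {x : ℝ}
    (hx : x ∈ ((Finset.univ : Finset (Fin m)).val.map fun i => |hM.eigenvalues i|).sort (· ≤ ·)) :
    ∃ i, x = |hM.eigenvalues i| := by
  rw [Multiset.mem_sort, Multiset.mem_map] at hx
  obtain ⟨i, _, rfl⟩ := hx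
  exact ⟨i, rfl⟩

lemma kthAbsEig_nonneg {m : ℕ} (M : Matrix (Fin m) (Fin m) ℝ) (k : ℕ) : 0 ≤ kthAbsEig M k := by
  rw [kthAbsEig]
  split
  · next hM =>
      refine getD_nonneg _ _ fun x hx => ?_
      obtain ⟨i, rfl⟩ := mem_sortedAbs hM hx
      exact abs_nonneg _
  · exact le_refl 0

lemma kthAbsEig_le_abs {m : ℕ} {M : Matrix (Fin m) (Fin m) ℝ} (hM : M.IsHermitian) (i : Fin m) :
    kthAbsEig M m ≤ |hM.eigenvalues i| := by
  rw [kthAbsEig_eq hM, Nat.sub_self]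
  refine sorted_getD_zero_le (Multiset.pairwise_sort _ _) ?_
  rw [Multiset.mem_sort, Multiset.mem_map]
  exact ⟨i, Finset.mem_univ i, rfl⟩

theorem stmt9 {n L K : ℕ} (hn : 0 < n) (hL : 0 < L) (hK : 0 < K) (hKn : K ≤ n)
    (Z : Matrix (Fin n) (Fin K) ℝ) (θ : Fin n → ℝ)
    (B : Fin L → Matrix (Fin K) (Fin K) ℝ)
    (hmodel : MLDCSBM Z θ B)
    (hrank : (∑ l, B l).rank = K) :
    thetaMin θ ^ 2 * nMin Z * kthAbsEig (∑ l, B l) K ≤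
      kthAbsEig (∑ l, OmegaL θ Z (B l)) K := by
  classical
  obtain ⟨⟨hZ01, hZrow, hZcol⟩, hθ, hB⟩ := hmodel
  set Bs : Matrix (Fin K) (Fin K) ℝ := ∑ l, B l with hBsdef
  set Ω : Matrix (Fin n) (Fin n) ℝ := ∑ l, OmegaL θ Z (B l) with hΩdef
  set A : Matrix (Fin n) (Fin K) ℝ := Matrix.diagonal θ * Z with hAdef
  -- Hermitian facts
  have hBsHerm : Bs.IsHermitian := by
    have h1 : Bsᵀ = Bs := by
      rw [hBsdef, Matrix.transpose_sum]
      exact Finset.sum_congr rfl fun l _ => (hB l).1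
    show Bsᴴ = Bs
    rwa [Matrix.conjTranspose_eq_transpose_of_trivial]
  have hAH : Aᴴ = Aᵀ := Matrix.conjTranspose_eq_transpose_of_trivial A
  have hΩeq : Ω = A * Bs * Aᴴ := by
    rw [hAH, hΩdef, hBsdef]
    have hAT : Aᵀ = Zᵀ * Matrix.diagonal θ := by
      rw [hAdef, Matrix.transpose_mul, Matrix.diagonal_transpose]
    rw [hAT, Matrix.mul_sum, Matrix.sum_mul]
    exact Finset.sum_congr rfl fun l _ => by simp [OmegaL, hAdef, Matrix.mul_assoc]
  have hΩHerm : Ω.IsHermitian := by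
    rw [hΩeq]; exact Matrix.isHermitian_mul_mul_conjTranspose A hBsHerm
  -- the diagonal Gram matrix
  set d : Fin K → ℝ := fun k => ∑ i, θ i ^ 2 * Z i k with hddef
  have hZnonneg : ∀ i k, 0 ≤ Z i k := by
    intro i k; rcases hZ01 i k with h | h <;> simp [h]
  have hZmul : ∀ (i : Fin n) (k k' : Fin K), k ≠ k' → Z i k * Z i k' = 0 := by
    intro i k k' hkk'
    rcases hZ01 i k with h | h
    · simp [h]
    rcases hZ01 i k' with h' | h'
    · simp [h']
    exfalso
    have h2 : ∑ a ∈ ({k, k'} : Finset (Fin K)), Z i a ≤ ∑ a, Z i a :=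
      Finset.sum_le_sum_of_subset_of_nonneg (Finset.subset_univ _) fun j _ _ => hZnonneg i j
    rw [Finset.sum_pair hkk', hZrow i, h, h'] at h2
    linarith
  have hAapp : ∀ i k, A i k = θ i * Z i k := by
    intro i k; rw [hAdef, Matrix.diagonal_mul]
  have hAtA : Aᵀ * A = Matrix.diagonal d := by
    ext k k'
    simp only [Matrix.mul_apply, Matrix.transpose_apply, Matrix.diagonal_apply]
    by_cases hkk' : k = k'
    · subst hkk'
      simp only [if_pos rfl, hddef]
      refine Finset.sum_congr rfl fun i _ => ?_
      simp only [hAapp]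
      have hzz : Z i k * Z i k = Z i k := by rcases hZ01 i k with h | h <;> simp [h]
      calc θ i * Z i k * (θ i * Z i k) = θ i ^ 2 * (Z i k * Z i k) := by ring
        _ = θ i ^ 2 * Z i k := by rw [hzz]
    · rw [if_neg hkk']
      refine Finset.sum_eq_zero fun i _ => ?_
      simp only [hAapp]
      calc θ i * Z i k * (θ i * Z i k') = θ i ^ 2 * (Z i k * Z i k') := by ring
        _ = 0 := by rw [hZmul i k k' hkk', mul_zero]
  -- scalar bounds
  have hθmin_le : ∀ i, thetaMin θ ≤ θ i := fun i =>
    csInf_le (Set.Finite.bddBelow (Set.finite_range θ)) ⟨i, rfl⟩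
  haveI : Nonempty (Fin n) := ⟨⟨0, hn⟩⟩
  haveI : Nonempty (Fin K) := ⟨⟨0, hK⟩⟩
  have hθmin_pos : 0 < thetaMin θ := by
    have hmem := (Set.range_nonempty θ).csInf_mem (Set.finite_range θ)
    obtain ⟨i, hi⟩ := hmem
    rw [thetaMin, ← hi]
    exact (hθ i).1
  have hnmin_le : ∀ k, nMin Z ≤ ∑ i, Z i k := fun k =>
    csInf_le (Set.Finite.bddBelow (Set.finite_range _)) ⟨k, rfl⟩
  have hnmin_nonneg : 0 ≤ nMin Z := by
    have hmem := (Set.range_nonempty fun k : Fin K => ∑ i, Z i k).csInf_mem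
      (Set.finite_range fun k : Fin K => ∑ i, Z i k)
    obtain ⟨k, hk⟩ := hmem
    rw [nMin, ← hk]
    exact Finset.sum_nonneg fun i _ => hZnonneg i k
  set c0 : ℝ := thetaMin θ ^ 2 * nMin Z with hc0def
  have hc0_nonneg : 0 ≤ c0 := mul_nonneg (sq_nonneg _) hnmin_nonneg
  have hc0d : ∀ k, c0 ≤ d k := by
    intro k
    have h1 : c0 ≤ thetaMin θ ^ 2 * ∑ i, Z i k :=
      mul_le_mul_of_nonneg_left (hnmin_le k) (sq_nonneg _)
    have h2 : thetaMin θ ^ 2 * ∑ i, Z i k ≤ d k := by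
      rw [Finset.mul_sum, hddef]
      exact Finset.sum_le_sum fun i _ =>
        mul_le_mul_of_nonneg_right
          (pow_le_pow_left₀ hθmin_pos.le (hθmin_le i) 2) (hZnonneg i k)
    linarith
  have hd_pos : ∀ k, 0 < d k := by
    intro k
    obtain ⟨i0, hi0⟩ := hZcol k
    refine Finset.sum_pos' (fun i _ => mul_nonneg (sq_nonneg _) (hZnonneg i k)) ⟨i0, Finset.mem_univ i0, ?_⟩
    rw [hi0, mul_one]
    exact pow_pos (hθ i0).1 2
  -- μ and t
  set μ : ℝ := kthAbsEig Bs K with hμdef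
  have hμ_nonneg : 0 ≤ μ := kthAbsEig_nonneg Bs K
  have hμ_le : ∀ i, μ ≤ |hBsHerm.eigenvalues i| := kthAbsEig_le_abs hBsHerm
  set t : ℝ := c0 * μ with htdef
  have ht_nonneg : 0 ≤ t := mul_nonneg hc0_nonneg hμ_nonneg
  -- quadratic form of A
  have hAv : ∀ v : Fin K → ℝ, (A *ᵥ v) ⬝ᵥ (A *ᵥ v) = ∑ k, d k * v k ^ 2 := by
    intro v
    rw [Matrix.dotProduct_mulVec, ← Matrix.mulVec_transpose, Matrix.mulVec_mulVec, hAtA]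
    simp only [dotProduct]
    refine Finset.sum_congr rfl fun k _ => ?_
    rw [Matrix.mulVec_diagonal]
    ring
  -- main counting claim
  rcases eq_or_lt_of_le ht_nonneg with ht0 | htpos
  · -- t = 0, trivial
    calc thetaMin θ ^ 2 * nMin Z * μ = t := rfl
      _ ≤ kthAbsEig Ω K := ht0 ▸ kthAbsEig_nonneg Ω K
  -- t > 0 case
  set F : Finset (Fin n) := Finset.univ.filter (fun i => t ≤ |hΩHerm.eigenvalues i|) with hFdef
  have hcard : K ≤ F.card := by
    by_contra hFc
    push_neg at hFc
    -- build a nonzero w in the kernel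
    set ψ : (Fin K → ℝ) →ₗ[ℝ] (F → ℝ) :=
      { toFun := fun w (i : F) => evec hΩHerm i ⬝ᵥ (A *ᵥ w)
        map_add' := by
          intro w w'; funext i
          simp [Matrix.mulVec_add, dotProduct_add]
        map_smul' := by
          intro r w; funext i
          simp [Matrix.mulVec_smul] } with hψdef
    have hnotinj : ¬ Function.Injective ψ := by
      intro hinj
      have h1 : Module.finrank ℝ (Fin K → ℝ) ≤ Module.finrank ℝ (↥F → ℝ) :=
        LinearMap.finrank_le_finrank_of_injective hinj
      rw [Module.finrank_fintype_fun_eq_card, Module.finrank_fintype_fun_eq_card,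
        Fintype.card_fin, Fintype.card_coe] at h1
      omega
    have hker : LinearMap.ker ψ ≠ ⊥ := fun h => hnotinj (LinearMap.ker_eq_bot.mp h)
    obtain ⟨w, hwker, hwne⟩ := Submodule.ne_bot_iff _ |>.mp hker
    have hψw : ψ w = 0 := LinearMap.mem_ker.mp hwker
    set x : Fin n → ℝ := A *ᵥ w with hxdef
    set cf : Fin n → ℝ := fun i => evec hΩHerm i ⬝ᵥ x with hcfdef
    have hcF : ∀ i, t ≤ |hΩHerm.eigenvalues i| → cf i = 0 := by
      intro i hi
      have := congrFun hψw ⟨i, Finset.mem_filter.mpr ⟨Finset.mem_univ i, hi⟩⟩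
      simpa [hψdef, hcfdef, hxdef] using this
    have hxx : x ⬝ᵥ x = ∑ k, d k * w k ^ 2 := hAv w
    have hxx_pos : 0 < x ⬝ᵥ x := by
      rw [hxx]
      obtain ⟨k0, hk0⟩ := Function.ne_iff.mp hwne
      have hwsq : 0 < w k0 ^ 2 := by
        have h := pow_pos (abs_pos.mpr (show w k0 ≠ 0 by simpa using hk0)) 2
        rwa [sq_abs] at h
      exact Finset.sum_pos' (fun k _ => mul_nonneg (hd_pos k).le (sq_nonneg _))
        ⟨k0, Finset.mem_univ k0, mul_pos (hd_pos k0) hwsq⟩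
    have hP1 : ∑ i, cf i ^ 2 = x ⬝ᵥ x := parseval hΩHerm x
    have hP2 : ∑ i, (hΩHerm.eigenvalues i * cf i) ^ 2 = (Ω *ᵥ x) ⬝ᵥ (Ω *ᵥ x) :=
      parseval_mulVec hΩHerm x
    -- lower bound
    set dw : Fin K → ℝ := fun k => d k * w k with hdwdef
    set u : Fin K → ℝ := Bs *ᵥ dw with hudef
    have hΩx : Ω *ᵥ x = A *ᵥ u := by
      have hdg : Matrix.diagonal d *ᵥ w = dw := by
        funext k; rw [Matrix.mulVec_diagonal]
      rw [hxdef, hudef, hΩeq, hAH, Matrix.mulVec_mulVec, Matrix.mul_assoc (A * Bs) Aᵀ A, hAtA,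
        ← hdg, ← Matrix.mulVec_mulVec, ← Matrix.mulVec_mulVec]
    have hlow1 : (Ω *ᵥ x) ⬝ᵥ (Ω *ᵥ x) = ∑ k, d k * u k ^ 2 := by rw [hΩx]; exact hAv u
    have hstep1 : c0 * ∑ k, u k ^ 2 ≤ ∑ k, d k * u k ^ 2 := by
      rw [Finset.mul_sum]
      exact Finset.sum_le_sum fun k _ => mul_le_mul_of_nonneg_right (hc0d k) (sq_nonneg _)
    have hBu : μ ^ 2 * (∑ k, dw k ^ 2) ≤ ∑ k, u k ^ 2 := by
      have h1 : ∑ k, u k ^ 2 = (Bs *ᵥ dw) ⬝ᵥ (Bs *ᵥ dw) := by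
        simp [hudef, dotProduct, sq]
      have h2 : (∑ k, dw k ^ 2) = dw ⬝ᵥ dw := by
        simp [dotProduct, sq]
      rw [h1, ← parseval_mulVec hBsHerm dw, h2, ← parseval hBsHerm dw, Finset.mul_sum]
      refine Finset.sum_le_sum fun i _ => ?_
      have hsq : μ ^ 2 ≤ hBsHerm.eigenvalues i ^ 2 := by
        rw [← sq_abs (hBsHerm.eigenvalues i)]
        exact pow_le_pow_left₀ hμ_nonneg (hμ_le i) 2
      calc μ ^ 2 * (evec hBsHerm i ⬝ᵥ dw) ^ 2
          ≤ hBsHerm.eigenvalues i ^ 2 * (evec hBsHerm i ⬝ᵥ dw) ^ 2 :=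
            mul_le_mul_of_nonneg_right hsq (sq_nonneg _)
        _ = (hBsHerm.eigenvalues i * (evec hBsHerm i ⬝ᵥ dw)) ^ 2 := by ring
    have hdw2 : c0 * (∑ k, d k * w k ^ 2) ≤ ∑ k, dw k ^ 2 := by
      rw [Finset.mul_sum]
      refine Finset.sum_le_sum fun k _ => ?_
      have : c0 * (d k * w k ^ 2) ≤ d k * (d k * w k ^ 2) :=
        mul_le_mul_of_nonneg_right (hc0d k) (mul_nonneg (hd_pos k).le (sq_nonneg _))
      calc c0 * (d k * w k ^ 2) ≤ d k * (d k * w k ^ 2) := this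
        _ = dw k ^ 2 := by rw [hdwdef]; ring
    have hlow : t ^ 2 * (x ⬝ᵥ x) ≤ (Ω *ᵥ x) ⬝ᵥ (Ω *ᵥ x) := by
      calc t ^ 2 * (x ⬝ᵥ x) = c0 * (μ ^ 2 * (c0 * (∑ k, d k * w k ^ 2))) := by
            rw [hxx, htdef]; ring
        _ ≤ c0 * (μ ^ 2 * (∑ k, dw k ^ 2)) :=
            mul_le_mul_of_nonneg_left
              (mul_le_mul_of_nonneg_left hdw2 (sq_nonneg μ)) hc0_nonneg
        _ ≤ c0 * (∑ k, u k ^ 2) := mul_le_mul_of_nonneg_left hBu hc0_nonneg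
        _ ≤ ∑ k, d k * u k ^ 2 := hstep1
        _ = (Ω *ᵥ x) ⬝ᵥ (Ω *ᵥ x) := hlow1.symm
    -- upper bound
    have hexist : ∃ i, cf i ≠ 0 := by
      by_contra hno
      push_neg at hno
      rw [← hP1] at hxx_pos
      simp only [hno] at hxx_pos
      simp at hxx_pos
    obtain ⟨i0, hi0⟩ := hexist
    have hi0S : |hΩHerm.eigenvalues i0| < t := by
      by_contra h
      push_neg at h
      exact hi0 (hcF i0 h)
    set S : Finset (Fin n) := Finset.univ.filter (fun i => |hΩHerm.eigenvalues i| < t) with hSdef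
    have hsum_eq : ∑ i, (hΩHerm.eigenvalues i * cf i) ^ 2
        = ∑ i ∈ S, (hΩHerm.eigenvalues i * cf i) ^ 2 := by
      symm
      refine Finset.sum_subset (Finset.subset_univ S) fun i _ hiS => ?_
      have : t ≤ |hΩHerm.eigenvalues i| := by
        by_contra h
        push_neg at h
        exact hiS (Finset.mem_filter.mpr ⟨Finset.mem_univ i, h⟩)
      rw [hcF i this]
      ring
    have hup1 : ∑ i ∈ S, (hΩHerm.eigenvalues i * cf i) ^ 2 < ∑ i ∈ S, t ^ 2 * cf i ^ 2 := by
      refine Finset.sum_lt_sum (fun i hi => ?_) ⟨i0, Finset.mem_filter.mpr ⟨Finset.mem_univ i0, hi0S⟩, ?_⟩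
      · have hlt : hΩHerm.eigenvalues i ^ 2 ≤ t ^ 2 := by
          rw [← sq_abs (hΩHerm.eigenvalues i)]
          exact pow_le_pow_left₀ (abs_nonneg _) (Finset.mem_filter.mp hi).2.le 2
        calc (hΩHerm.eigenvalues i * cf i) ^ 2 = hΩHerm.eigenvalues i ^ 2 * cf i ^ 2 := by ring
          _ ≤ t ^ 2 * cf i ^ 2 := mul_le_mul_of_nonneg_right hlt (sq_nonneg _)
      · have hlt : hΩHerm.eigenvalues i0 ^ 2 < t ^ 2 := by
          rw [← sq_abs (hΩHerm.eigenvalues i0)]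
          exact pow_lt_pow_left₀ hi0S (abs_nonneg _) (by norm_num)
        calc (hΩHerm.eigenvalues i0 * cf i0) ^ 2 = hΩHerm.eigenvalues i0 ^ 2 * cf i0 ^ 2 := by ring
          _ < t ^ 2 * cf i0 ^ 2 := by
            have hcf2 : 0 < cf i0 ^ 2 := by
              have h := pow_pos (abs_pos.mpr hi0) 2
              rwa [sq_abs] at h
            exact mul_lt_mul_of_pos_right hlt hcf2
    have hup2 : ∑ i ∈ S, t ^ 2 * cf i ^ 2 ≤ t ^ 2 * (x ⬝ᵥ x) := by
      rw [← hP1, Finset.mul_sum]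
      exact Finset.sum_le_sum_of_subset_of_nonneg (Finset.subset_univ S)
        fun i _ _ => mul_nonneg (sq_nonneg t) (sq_nonneg _)
    have : (Ω *ᵥ x) ⬝ᵥ (Ω *ᵥ x) < t ^ 2 * (x ⬝ᵥ x) := by
      rw [← hP2, hsum_eq]
      exact lt_of_lt_of_le hup1 hup2
    linarith
  -- from the cardinality bound to the sorted list bound
  have hglist := kthAbsEig_eq hΩHerm K
  set l : List ℝ := (((Finset.univ : Finset (Fin n)).val.map
      fun i => |hΩHerm.eigenvalues i|).sort (· ≤ ·)) with hldef
  have hlen : l.length = n := by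
    rw [hldef, Multiset.length_sort, Multiset.card_map]
    simp
  have hcount : l.countP (fun y => decide (y < t)) ≤ n - K := by
    have h1 : l.countP (fun y => decide (y < t))
        = (Finset.univ.filter (fun i => |hΩHerm.eigenvalues i| < t)).card := by
      rw [← Multiset.coe_countP (fun y : ℝ => y < t) l, hldef, Multiset.sort_eq,
        Multiset.countP_map]
      rw [Finset.card, Finset.filter_val]
    have h2 := Finset.card_filter_add_card_filter_not
      (s := (Finset.univ : Finset (Fin n))) (p := fun i => t ≤ |hΩHerm.eigenvalues i|)
    have h3 : Finset.univ.filter (fun i => ¬ t ≤ |hΩHerm.eigenvalues i|)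
        = Finset.univ.filter (fun i => |hΩHerm.eigenvalues i| < t) := by
      refine Finset.filter_congr fun i _ => ?_
      simp [not_le]
    rw [h3] at h2
    have h4 : (Finset.univ : Finset (Fin n)).card = n := by simp
    have hFcard : (Finset.univ.filter (fun i => t ≤ |hΩHerm.eigenvalues i|)).card = F.card := rfl
    rw [h1]
    omega
  have hsorted : l.Pairwise (· ≤ ·) := Multiset.pairwise_sort _ _
  have hjlen : n - K < l.length := by rw [hlen]; omega
  have hfin : t ≤ l.getD (n - K) 0 :=
    sorted_getD_ge hsorted hjlen hcount
  calc thetaMin θ ^ 2 * nMin Z * μ = t := rfl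
    _ ≤ l.getD (n - K) 0 := hfin
    _ = kthAbsEig Ω K := by rw [hglist]

end
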